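/- Let M be an algebra with a distinguished character η: M → k and H a bialgebra, forming a right cocycle double cross coproduct pair with algebra maps ∇: M → H⊗M (x ↦ x₍₋₁₎⊗x₍₀₎), ▼: H → H⊗M (h ↦ h₍0̄₎⊗h₍1̄₎), δ: M → M⊗M (x ↦ x⁽¹⁾⊗x⁽²⁾), σ: H → M⊗M. Then the comultiplication Δ(x⊗h) = (x⁽¹⁾ h₍₁₎⁽¹⁾ ⊗ x⁽²⁾₍₋₁₎ h₍₁₎⁽²⁾₍₋₁₎ h₍₂₎₍0̄₎) ⊗ (x⁽²⁾₍₀₎ h₍₁₎⁽²⁾₍₀₎ h₍₂₎₍1̄₎ ⊗ h₍₃₎) on M⊗H with tensor product algebra structure, together with counit ε(x⊗h) = η(x)ε(h), is counital if and only if η(x⁽¹⁾)x⁽²⁾ = x = x⁽¹⁾η(x⁽²⁾) and η(h⁽¹⁾)h⁽²⁾ = ε(h)1 = h⁽¹⁾η(h⁽²⁾) for all x ∈ M, h ∈ H. -/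

import Mathlib

open TensorProduct LinearMap

section

variable (k : Type*) [Field k] (M H : Type*)
  [Ring M] [Algebra k M] [Ring H] [Bialgebra k H]

/-- The comultiplication of the (right) cocycle double cross coproduct
`Δ(x⊗h) = (x⁽¹⁾h₍₁₎⁽¹⁾ ⊗ x⁽²⁾₍₋₁₎h₍₁₎⁽²⁾₍₋₁₎h₍₂₎₍0̄₎) ⊗ (x⁽²⁾₍₀₎h₍₁₎⁽²⁾₍₀₎h₍₂₎₍1̄₎ ⊗ h₍₃₎)`. -/
noncomputable def cdccComul
    (nabla : M →ₐ[k] (H ⊗[k] M)) (bdown : H →ₐ[k] (H ⊗[k] M))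
    (delta : M →ₐ[k] (M ⊗[k] M)) (sigma : H →ₐ[k] (M ⊗[k] M)) :
    (M ⊗[k] H) →ₗ[k] (M ⊗[k] H) ⊗[k] (M ⊗[k] H) :=
  -- product on the tensor algebra `H ⊗ M`
  letI mulHM : (H ⊗[k] M) ⊗[k] (H ⊗[k] M) →ₗ[k] H ⊗[k] M :=
    (TensorProduct.map (LinearMap.mul' k H) (LinearMap.mul' k M)) ∘ₗ
      (TensorProduct.tensorTensorTensorComm k H M H M).toLinearMap
  -- `x ↦ x⁽¹⁾ ⊗ (x⁽²⁾₍₋₁₎ ⊗ x⁽²⁾₍₀₎)`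
  letI A : M →ₗ[k] M ⊗[k] (H ⊗[k] M) :=
    (LinearMap.lTensor M nabla.toLinearMap) ∘ₗ delta.toLinearMap
  -- `h ↦ h₍₁₎ ⊗ (h₍₂₎ ⊗ h₍₃₎)`
  letI d3H : H →ₗ[k] H ⊗[k] (H ⊗[k] H) :=
    (LinearMap.lTensor H (Coalgebra.comul : H →ₗ[k] H ⊗[k] H)) ∘ₗ
      (Coalgebra.comul : H →ₗ[k] H ⊗[k] H)
  -- `h ↦ (h₍₁₎⁽¹⁾ ⊗ (h₍₁₎⁽²⁾₍₋₁₎ ⊗ h₍₁₎⁽²⁾₍₀₎)) ⊗ ((h₍₂₎₍0̄₎ ⊗ h₍₂₎₍1̄₎) ⊗ h₍₃₎)`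
  letI B : H →ₗ[k] (M ⊗[k] (H ⊗[k] M)) ⊗[k] ((H ⊗[k] M) ⊗[k] H) :=
    (TensorProduct.map
      ((LinearMap.lTensor M nabla.toLinearMap) ∘ₗ sigma.toLinearMap)
      (TensorProduct.map bdown.toLinearMap LinearMap.id)) ∘ₗ d3H
  -- componentwise product on `M ⊗ (H ⊗ M)`
  letI C : (M ⊗[k] (H ⊗[k] M)) ⊗[k] (M ⊗[k] (H ⊗[k] M)) →ₗ[k] M ⊗[k] (H ⊗[k] M) :=
    (TensorProduct.map (LinearMap.mul' k M) mulHM) ∘ₗ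
      (TensorProduct.tensorTensorTensorComm k M (H ⊗[k] M) M (H ⊗[k] M)).toLinearMap
  letI D : (M ⊗[k] (H ⊗[k] M)) ⊗[k] (H ⊗[k] M) →ₗ[k] M ⊗[k] (H ⊗[k] M) :=
    (LinearMap.lTensor M mulHM) ∘ₗ
      (TensorProduct.assoc k M (H ⊗[k] M) (H ⊗[k] M)).toLinearMap
  -- final reshaping `(a ⊗ (b ⊗ c)) ⊗ h₃ ↦ (a ⊗ b) ⊗ (c ⊗ h₃)`
  letI reshape : (M ⊗[k] (H ⊗[k] M)) ⊗[k] H →ₗ[k] (M ⊗[k] H) ⊗[k] (M ⊗[k] H) :=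
    (TensorProduct.assoc k (M ⊗[k] H) M H).toLinearMap ∘ₗ
      (LinearMap.rTensor H ((TensorProduct.assoc k M H M).symm.toLinearMap))
  reshape ∘ₗ
    (LinearMap.rTensor H D) ∘ₗ
    (TensorProduct.assoc k (M ⊗[k] (H ⊗[k] M)) (H ⊗[k] M) H).symm.toLinearMap ∘ₗ
    (LinearMap.rTensor ((H ⊗[k] M) ⊗[k] H) C) ∘ₗ
    (TensorProduct.assoc k (M ⊗[k] (H ⊗[k] M)) (M ⊗[k] (H ⊗[k] M))
      ((H ⊗[k] M) ⊗[k] H)).symm.toLinearMap ∘ₗ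
    (TensorProduct.map A B)


section Aux

open Coalgebra

set_option maxHeartbeats 1000000 in
set_option synthInstance.maxHeartbeats 400000 in
example : True := trivial

set_option maxHeartbeats 1000000
set_option synthInstance.maxHeartbeats 400000

/-- `ε ⊗ id : H ⊗ M → M` as an algebra hom. -/
noncomputable def auxP1 : (H ⊗[k] M) →ₐ[k] M :=
  (Algebra.TensorProduct.lid k M).toAlgHom.comp
    (Algebra.TensorProduct.map (Bialgebra.counitAlgHom k H) (AlgHom.id k M))

@[simp] lemma auxP1_tmul (u : H) (v : M) :
    auxP1 k M H (u ⊗ₜ[k] v) = Coalgebra.counit (R := k) u • v := by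
  simp [auxP1]

/-- `id ⊗ η : H ⊗ M → H` as an algebra hom. -/
noncomputable def auxP2 (eta : M →ₐ[k] k) : (H ⊗[k] M) →ₐ[k] H :=
  (Algebra.TensorProduct.rid k k H).toAlgHom.comp
    (Algebra.TensorProduct.map (AlgHom.id k H) eta)

@[simp] lemma auxP2_tmul (eta : M →ₐ[k] k) (u : H) (v : M) :
    auxP2 k M H eta (u ⊗ₜ[k] v) = eta v • u := by
  simp [auxP2]

/-- `η ⊗ id : M ⊗ M → M` as an algebra hom. -/
noncomputable def auxQ1 (eta : M →ₐ[k] k) : (M ⊗[k] M) →ₐ[k] M :=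
  (Algebra.TensorProduct.lid k M).toAlgHom.comp
    (Algebra.TensorProduct.map eta (AlgHom.id k M))

@[simp] lemma auxQ1_tmul (eta : M →ₐ[k] k) (a b : M) :
    auxQ1 k M eta (a ⊗ₜ[k] b) = eta a • b := by
  simp [auxQ1]

/-- `id ⊗ η : M ⊗ M → M` as an algebra hom. -/
noncomputable def auxQ2 (eta : M →ₐ[k] k) : (M ⊗[k] M) →ₐ[k] M :=
  (Algebra.TensorProduct.rid k k M).toAlgHom.comp
    (Algebra.TensorProduct.map (AlgHom.id k M) eta)

@[simp] lemma auxQ2_tmul (eta : M →ₐ[k] k) (a b : M) :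
    auxQ2 k M eta (a ⊗ₜ[k] b) = eta b • a := by
  simp [auxQ2]

lemma auxP1_apply_eq (w : H ⊗[k] M) :
    auxP1 k M H w =
      TensorProduct.lid k M
        (LinearMap.rTensor M (Coalgebra.counit : H →ₗ[k] k) w) := by
  induction w using TensorProduct.induction_on with
  | zero => simp
  | tmul u v => simp
  | add u v hu hv => simp [hu, hv]

lemma auxP2_apply_eq (eta : M →ₐ[k] k) (w : H ⊗[k] M) :
    auxP2 k M H eta w =
      TensorProduct.rid k H (LinearMap.lTensor H eta.toLinearMap w) := by
  induction w using TensorProduct.induction_on with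
  | zero => simp
  | tmul u v => simp
  | add u v hu hv => simp [hu, hv]

lemma auxQ1_apply_eq (eta : M →ₐ[k] k) (w : M ⊗[k] M) :
    auxQ1 k M eta w =
      TensorProduct.lid k M (LinearMap.rTensor M eta.toLinearMap w) := by
  induction w using TensorProduct.induction_on with
  | zero => simp
  | tmul u v => simp
  | add u v hu hv => simp [hu, hv]

lemma auxQ2_apply_eq (eta : M →ₐ[k] k) (w : M ⊗[k] M) :
    auxQ2 k M eta w =
      TensorProduct.rid k M (LinearMap.lTensor M eta.toLinearMap w) := by
  induction w using TensorProduct.induction_on with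
  | zero => simp
  | tmul u v => simp
  | add u v hu hv => simp [hu, hv]

lemma repr_sum_counit_smul {a : H} (rp : Coalgebra.Repr k a (H × H)) :
    ∑ i ∈ rp.index, Coalgebra.counit (R := k) (rp.left i) • rp.right i = a := by
  have h := Coalgebra.sum_counit_tmul_eq (R := k) rp
  have h2 := congrArg (TensorProduct.lid k H) h
  rw [map_sum] at h2
  simp only [TensorProduct.lid_tmul, one_smul] at h2
  exact h2

lemma repr_sum_smul_counit {a : H} (rp : Coalgebra.Repr k a (H × H)) :
    ∑ i ∈ rp.index, Coalgebra.counit (R := k) (rp.right i) • rp.left i = a := by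
  have h := Coalgebra.sum_tmul_counit_eq (R := k) rp
  have h2 := congrArg (TensorProduct.rid k H) h
  rw [map_sum] at h2
  simp only [TensorProduct.rid_tmul, one_smul] at h2
  exact h2

/-- the multiplication of `H ⊗ M` as appearing in `cdccComul`. -/
noncomputable def auxMul : (H ⊗[k] M) ⊗[k] (H ⊗[k] M) →ₗ[k] H ⊗[k] M :=
  (TensorProduct.map (LinearMap.mul' k H) (LinearMap.mul' k M)) ∘ₗ
    (TensorProduct.tensorTensorTensorComm k H M H M).toLinearMap

lemma auxMul_tmul (u v : H ⊗[k] M) : auxMul k M H (u ⊗ₜ[k] v) = u * v := by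
  induction u using TensorProduct.induction_on with
  | zero => simp [auxMul]
  | tmul a b =>
    induction v using TensorProduct.induction_on with
    | zero => simp [auxMul]
    | tmul c d =>
      simp [auxMul, Algebra.TensorProduct.tmul_mul_tmul, LinearMap.mul'_apply]
    | add v₁ v₂ h₁ h₂ => simp only [tmul_add, map_add, mul_add, h₁, h₂]
  | add u₁ u₂ h₁ h₂ => simp only [add_tmul, map_add, add_mul, h₁, h₂]

noncomputable def auxC :
    (M ⊗[k] (H ⊗[k] M)) ⊗[k] (M ⊗[k] (H ⊗[k] M)) →ₗ[k] M ⊗[k] (H ⊗[k] M) :=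
  (TensorProduct.map (LinearMap.mul' k M) (auxMul k M H)) ∘ₗ
    (TensorProduct.tensorTensorTensorComm k M (H ⊗[k] M) M (H ⊗[k] M)).toLinearMap

lemma auxC_tmul (a b : M) (u v : H ⊗[k] M) :
    auxC k M H ((a ⊗ₜ[k] u) ⊗ₜ[k] (b ⊗ₜ[k] v)) = (a * b) ⊗ₜ[k] (u * v) := by
  simp [auxC, auxMul_tmul, LinearMap.mul'_apply]

noncomputable def auxD :
    (M ⊗[k] (H ⊗[k] M)) ⊗[k] (H ⊗[k] M) →ₗ[k] M ⊗[k] (H ⊗[k] M) :=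
  (LinearMap.lTensor M (auxMul k M H)) ∘ₗ
    (TensorProduct.assoc k M (H ⊗[k] M) (H ⊗[k] M)).toLinearMap

lemma auxD_tmul (a : M) (u v : H ⊗[k] M) :
    auxD k M H ((a ⊗ₜ[k] u) ⊗ₜ[k] v) = a ⊗ₜ[k] (u * v) := by
  simp [auxD, auxMul_tmul]

noncomputable def auxReshape :
    (M ⊗[k] (H ⊗[k] M)) ⊗[k] H →ₗ[k] (M ⊗[k] H) ⊗[k] (M ⊗[k] H) :=
  (TensorProduct.assoc k (M ⊗[k] H) M H).toLinearMap ∘ₗ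
    (LinearMap.rTensor H ((TensorProduct.assoc k M H M).symm.toLinearMap))

noncomputable def auxFinL (eta : M →ₐ[k] k) :
    (M ⊗[k] (H ⊗[k] M)) ⊗[k] H →ₗ[k] M ⊗[k] H :=
  (TensorProduct.lid k (M ⊗[k] H)).toLinearMap ∘ₗ
    (LinearMap.rTensor (M ⊗[k] H)
      ((TensorProduct.lid k k).toLinearMap ∘ₗ
        (TensorProduct.map eta.toLinearMap (Coalgebra.counit : H →ₗ[k] k)))) ∘ₗ
    auxReshape k M H

lemma auxFinL_tmul (eta : M →ₐ[k] k) (a : M) (w : H ⊗[k] M) (d : H) :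
    auxFinL k M H eta ((a ⊗ₜ[k] w) ⊗ₜ[k] d) =
      eta a • (auxP1 k M H w ⊗ₜ[k] d) := by
  induction w using TensorProduct.induction_on with
  | zero => simp [auxFinL, auxReshape]
  | tmul u v =>
    simp [auxFinL, auxReshape, smul_tmul', mul_smul, smul_eq_mul]
  | add u v hu hv =>
    simp only [tmul_add, add_tmul, map_add, hu, hv, smul_add]

noncomputable def auxFinR (eta : M →ₐ[k] k) :
    (M ⊗[k] (H ⊗[k] M)) ⊗[k] H →ₗ[k] M ⊗[k] H :=
  (TensorProduct.rid k (M ⊗[k] H)).toLinearMap ∘ₗ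
    (LinearMap.lTensor (M ⊗[k] H)
      ((TensorProduct.lid k k).toLinearMap ∘ₗ
        (TensorProduct.map eta.toLinearMap (Coalgebra.counit : H →ₗ[k] k)))) ∘ₗ
    auxReshape k M H

lemma auxFinR_tmul (eta : M →ₐ[k] k) (a : M) (w : H ⊗[k] M) (d : H) :
    auxFinR k M H eta ((a ⊗ₜ[k] w) ⊗ₜ[k] d) =
      Coalgebra.counit (R := k) d • (a ⊗ₜ[k] auxP2 k M H eta w) := by
  induction w using TensorProduct.induction_on with
  | zero => simp [auxFinR, auxReshape]
  | tmul u v =>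
    simp only [auxFinR, auxReshape, LinearMap.coe_comp, Function.comp_apply,
      LinearEquiv.coe_coe, LinearMap.rTensor_tmul, TensorProduct.assoc_symm_tmul,
      TensorProduct.assoc_tmul, LinearMap.lTensor_tmul, TensorProduct.map_tmul,
      TensorProduct.lid_tmul, TensorProduct.rid_tmul, auxP2_tmul, smul_eq_mul,
      AlgHom.toLinearMap_apply, tmul_smul, smul_smul]
    rw [mul_comm]
  | add u v hu hv =>
    simp only [tmul_add, add_tmul, map_add, hu, hv, smul_add]

noncomputable def auxPre :
    (M ⊗[k] (H ⊗[k] M)) ⊗[k] ((M ⊗[k] (H ⊗[k] M)) ⊗[k] ((H ⊗[k] M) ⊗[k] H)) →ₗ[k]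
      (M ⊗[k] (H ⊗[k] M)) ⊗[k] H :=
  (LinearMap.rTensor H (auxD k M H)) ∘ₗ
    (TensorProduct.assoc k (M ⊗[k] (H ⊗[k] M)) (H ⊗[k] M) H).symm.toLinearMap ∘ₗ
    (LinearMap.rTensor ((H ⊗[k] M) ⊗[k] H) (auxC k M H)) ∘ₗ
    (TensorProduct.assoc k (M ⊗[k] (H ⊗[k] M)) (M ⊗[k] (H ⊗[k] M))
      ((H ⊗[k] M) ⊗[k] H)).symm.toLinearMap

lemma auxPre_tmul (a b : M) (u v w : H ⊗[k] M) (d : H) :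
    auxPre k M H ((a ⊗ₜ[k] u) ⊗ₜ[k] ((b ⊗ₜ[k] v) ⊗ₜ[k] (w ⊗ₜ[k] d))) =
      ((a * b) ⊗ₜ[k] (u * v * w)) ⊗ₜ[k] d := by
  simp [auxPre, auxC_tmul, auxD_tmul]

/-- `cdccComul` in terms of the named pieces. -/
lemma cdccComul_eq
    (nabla : M →ₐ[k] (H ⊗[k] M)) (bdown : H →ₐ[k] (H ⊗[k] M))
    (delta : M →ₐ[k] (M ⊗[k] M)) (sigma : H →ₐ[k] (M ⊗[k] M)) :
    cdccComul k M H nabla bdown delta sigma =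
      (auxReshape k M H) ∘ₗ (auxPre k M H) ∘ₗ
        TensorProduct.map
          ((LinearMap.lTensor M nabla.toLinearMap) ∘ₗ delta.toLinearMap)
          ((TensorProduct.map
            ((LinearMap.lTensor M nabla.toLinearMap) ∘ₗ sigma.toLinearMap)
            (TensorProduct.map bdown.toLinearMap LinearMap.id)) ∘ₗ
            ((LinearMap.lTensor H (Coalgebra.comul : H →ₗ[k] H ⊗[k] H)) ∘ₗ
              (Coalgebra.comul : H →ₗ[k] H ⊗[k] H))) := rfl

lemma mul_algebraMap_eq_smul (m : M) (c : k) :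
    m * algebraMap k M c = c • m := by
  rw [← Algebra.commutes, ← Algebra.smul_def]

lemma keyL (eta : M →ₐ[k] k)
    (nabla : M →ₐ[k] (H ⊗[k] M)) (bdown : H →ₐ[k] (H ⊗[k] M))
    (delta : M →ₐ[k] (M ⊗[k] M)) (sigma : H →ₐ[k] (M ⊗[k] M))
    (H1 : ∀ m : M, auxP1 k M H (nabla m) = m)
    (H4 : ∀ x : H, auxP1 k M H (bdown x) = algebraMap k M (Coalgebra.counit (R := k) x)) :
    (TensorProduct.lid k (M ⊗[k] H)).toLinearMap ∘ₗ
      (LinearMap.rTensor (M ⊗[k] H)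
        ((TensorProduct.lid k k).toLinearMap ∘ₗ
          (TensorProduct.map eta.toLinearMap (Coalgebra.counit : H →ₗ[k] k)))) ∘ₗ
      cdccComul k M H nabla bdown delta sigma =
    (LinearMap.rTensor H (LinearMap.mul' k M)) ∘ₗ
      (TensorProduct.assoc k M M H).symm.toLinearMap ∘ₗ
      TensorProduct.map ((auxQ1 k M eta).toLinearMap ∘ₗ delta.toLinearMap)
        ((LinearMap.rTensor H ((auxQ1 k M eta).toLinearMap ∘ₗ sigma.toLinearMap)) ∘ₗ
          (Coalgebra.comul : H →ₗ[k] H ⊗[k] H)) := by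
  have hre : (TensorProduct.lid k (M ⊗[k] H)).toLinearMap ∘ₗ
      (LinearMap.rTensor (M ⊗[k] H)
        ((TensorProduct.lid k k).toLinearMap ∘ₗ
          (TensorProduct.map eta.toLinearMap (Coalgebra.counit : H →ₗ[k] k)))) ∘ₗ
      cdccComul k M H nabla bdown delta sigma =
      (auxFinL k M H eta) ∘ₗ (auxPre k M H) ∘ₗ
        TensorProduct.map
          ((LinearMap.lTensor M nabla.toLinearMap) ∘ₗ delta.toLinearMap)
          ((TensorProduct.map
            ((LinearMap.lTensor M nabla.toLinearMap) ∘ₗ sigma.toLinearMap)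
            (TensorProduct.map bdown.toLinearMap LinearMap.id)) ∘ₗ
            ((LinearMap.lTensor H (Coalgebra.comul : H →ₗ[k] H ⊗[k] H)) ∘ₗ
              (Coalgebra.comul : H →ₗ[k] H ⊗[k] H))) := rfl
  rw [hre]
  apply TensorProduct.ext'
  intro x h
  obtain ⟨S, hS⟩ := TensorProduct.exists_finset (R := k) (delta x)
  have r : Coalgebra.Repr k h (H × H) := Coalgebra.Repr.arbitrary k h
  have r2 : (i : H × H) → Coalgebra.Repr k (r.right i) (H × H) :=
    fun i => Coalgebra.Repr.arbitrary k (r.right i)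
  choose T hT using fun i : H × H => TensorProduct.exists_finset (R := k) (sigma (r.left i))
  have hAexp : (LinearMap.lTensor M nabla.toLinearMap) (delta x)
      = ∑ p ∈ S, p.1 ⊗ₜ[k] (nabla p.2 : H ⊗[k] M) := by
    rw [hS, map_sum]
    exact Finset.sum_congr rfl fun p _ => rfl
  have hBexp : (TensorProduct.map
        ((LinearMap.lTensor M nabla.toLinearMap) ∘ₗ sigma.toLinearMap)
        (TensorProduct.map bdown.toLinearMap LinearMap.id))
        ((LinearMap.lTensor H (Coalgebra.comul : H →ₗ[k] H ⊗[k] H))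
          ((Coalgebra.comul : H →ₗ[k] H ⊗[k] H) h))
      = ∑ i ∈ r.index, ∑ j ∈ (r2 i).index, ∑ q ∈ T i,
          (q.1 ⊗ₜ[k] (nabla q.2 : H ⊗[k] M)) ⊗ₜ[k]
            ((bdown ((r2 i).left j) : H ⊗[k] M) ⊗ₜ[k] (r2 i).right j) := by
    rw [← r.eq, map_sum, map_sum]
    refine Finset.sum_congr rfl fun i _ => ?_
    rw [LinearMap.lTensor_tmul, ← (r2 i).eq, TensorProduct.tmul_sum, map_sum]
    refine Finset.sum_congr rfl fun j _ => ?_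
    simp only [TensorProduct.map_tmul, LinearMap.coe_comp, Function.comp_apply,
      AlgHom.toLinearMap_apply, LinearMap.id_coe, id_eq]
    rw [hT i, map_sum, TensorProduct.sum_tmul]
    exact Finset.sum_congr rfl fun q _ => rfl
  have hδx : (auxQ1 k M eta) (delta x) = ∑ p ∈ S, eta p.1 • p.2 := by
    rw [hS, map_sum]
    exact Finset.sum_congr rfl fun p _ => auxQ1_tmul k M eta p.1 p.2
  have hcom : LinearMap.rTensor H ((auxQ1 k M eta).toLinearMap ∘ₗ sigma.toLinearMap)
      ((Coalgebra.comul : H →ₗ[k] H ⊗[k] H) h)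
      = ∑ i ∈ r.index, (∑ q ∈ T i, eta q.1 • q.2) ⊗ₜ[k] r.right i := by
    rw [← r.eq, map_sum]
    refine Finset.sum_congr rfl fun i _ => ?_
    rw [LinearMap.rTensor_tmul, LinearMap.coe_comp, Function.comp_apply,
      AlgHom.toLinearMap_apply, AlgHom.toLinearMap_apply, hT i, map_sum]
    exact congrArg (· ⊗ₜ[k] r.right i)
      (Finset.sum_congr rfl fun q _ => auxQ1_tmul k M eta q.1 q.2)
  simp only [LinearMap.coe_comp, Function.comp_apply, TensorProduct.map_tmul,
    AlgHom.toLinearMap_apply, LinearEquiv.coe_coe]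
  rw [hAexp, hBexp, hδx, hcom]
  -- expand all finite sums on both sides
  simp only [TensorProduct.sum_tmul, TensorProduct.tmul_sum, map_sum]
  -- simplify each summand on the left
  have hterm : ∀ (p q : M × M) (i j : H × H),
      auxFinL k M H eta (auxPre k M H
        ((p.1 ⊗ₜ[k] (nabla p.2 : H ⊗[k] M)) ⊗ₜ[k]
          ((q.1 ⊗ₜ[k] (nabla q.2 : H ⊗[k] M)) ⊗ₜ[k]
            ((bdown ((r2 i).left j) : H ⊗[k] M) ⊗ₜ[k] (r2 i).right j))))
      = (eta p.1 * eta q.1) •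
          ((p.2 * q.2) ⊗ₜ[k]
            (Coalgebra.counit (R := k) ((r2 i).left j) • (r2 i).right j)) := by
    intro p q i j
    rw [auxPre_tmul, auxFinL_tmul, map_mul, map_mul, map_mul, H1, H1, H4,
      mul_algebraMap_eq_smul, TensorProduct.smul_tmul]
  refine Finset.sum_congr rfl fun i _ => ?_
  conv_lhs => rw [Finset.sum_comm]
  refine Finset.sum_congr rfl fun q _ => ?_
  conv_lhs => rw [Finset.sum_comm]
  refine Finset.sum_congr rfl fun p _ => ?_
  rw [TensorProduct.assoc_symm_tmul, LinearMap.rTensor_tmul, LinearMap.mul'_apply,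
    smul_mul_smul_comm, ← TensorProduct.smul_tmul']
  calc (∑ j ∈ (r2 i).index,
        auxFinL k M H eta (auxPre k M H
          ((p.1 ⊗ₜ[k] (nabla p.2 : H ⊗[k] M)) ⊗ₜ[k]
            ((q.1 ⊗ₜ[k] (nabla q.2 : H ⊗[k] M)) ⊗ₜ[k]
              ((bdown ((r2 i).left j) : H ⊗[k] M) ⊗ₜ[k] (r2 i).right j)))))
      = ∑ j ∈ (r2 i).index, (eta p.1 * eta q.1) •
          ((p.2 * q.2) ⊗ₜ[k]
            (Coalgebra.counit (R := k) ((r2 i).left j) • (r2 i).right j)) :=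
        Finset.sum_congr rfl fun j _ => hterm p q i j
    _ = (eta p.1 * eta q.1) • ((p.2 * q.2) ⊗ₜ[k] r.right i) := by
        rw [← Finset.smul_sum, ← TensorProduct.tmul_sum,
          repr_sum_counit_smul k H (r2 i)]

lemma keyR (eta : M →ₐ[k] k)
    (nabla : M →ₐ[k] (H ⊗[k] M)) (bdown : H →ₐ[k] (H ⊗[k] M))
    (delta : M →ₐ[k] (M ⊗[k] M)) (sigma : H →ₐ[k] (M ⊗[k] M))
    (H2 : ∀ x : H, auxP2 k M H eta (bdown x) = x)
    (H3 : ∀ m : M, auxP2 k M H eta (nabla m) = algebraMap k H (eta m)) :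
    (TensorProduct.rid k (M ⊗[k] H)).toLinearMap ∘ₗ
      (LinearMap.lTensor (M ⊗[k] H)
        ((TensorProduct.lid k k).toLinearMap ∘ₗ
          (TensorProduct.map eta.toLinearMap (Coalgebra.counit : H →ₗ[k] k)))) ∘ₗ
      cdccComul k M H nabla bdown delta sigma =
    (LinearMap.rTensor H (LinearMap.mul' k M)) ∘ₗ
      (TensorProduct.assoc k M M H).symm.toLinearMap ∘ₗ
      TensorProduct.map ((auxQ2 k M eta).toLinearMap ∘ₗ delta.toLinearMap)
        ((LinearMap.rTensor H ((auxQ2 k M eta).toLinearMap ∘ₗ sigma.toLinearMap)) ∘ₗ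
          (Coalgebra.comul : H →ₗ[k] H ⊗[k] H)) := by
  have hre : (TensorProduct.rid k (M ⊗[k] H)).toLinearMap ∘ₗ
      (LinearMap.lTensor (M ⊗[k] H)
        ((TensorProduct.lid k k).toLinearMap ∘ₗ
          (TensorProduct.map eta.toLinearMap (Coalgebra.counit : H →ₗ[k] k)))) ∘ₗ
      cdccComul k M H nabla bdown delta sigma =
      (auxFinR k M H eta) ∘ₗ (auxPre k M H) ∘ₗ
        TensorProduct.map
          ((LinearMap.lTensor M nabla.toLinearMap) ∘ₗ delta.toLinearMap)
          ((TensorProduct.map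
            ((LinearMap.lTensor M nabla.toLinearMap) ∘ₗ sigma.toLinearMap)
            (TensorProduct.map bdown.toLinearMap LinearMap.id)) ∘ₗ
            ((LinearMap.lTensor H (Coalgebra.comul : H →ₗ[k] H ⊗[k] H)) ∘ₗ
              (Coalgebra.comul : H →ₗ[k] H ⊗[k] H))) := rfl
  rw [hre]
  apply TensorProduct.ext'
  intro x h
  obtain ⟨S, hS⟩ := TensorProduct.exists_finset (R := k) (delta x)
  have r : Coalgebra.Repr k h (H × H) := Coalgebra.Repr.arbitrary k h
  have r2 : (i : H × H) → Coalgebra.Repr k (r.right i) (H × H) :=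
    fun i => Coalgebra.Repr.arbitrary k (r.right i)
  choose T hT using fun i : H × H => TensorProduct.exists_finset (R := k) (sigma (r.left i))
  have hAexp : (LinearMap.lTensor M nabla.toLinearMap) (delta x)
      = ∑ p ∈ S, p.1 ⊗ₜ[k] (nabla p.2 : H ⊗[k] M) := by
    rw [hS, map_sum]
    exact Finset.sum_congr rfl fun p _ => rfl
  have hBexp : (TensorProduct.map
        ((LinearMap.lTensor M nabla.toLinearMap) ∘ₗ sigma.toLinearMap)
        (TensorProduct.map bdown.toLinearMap LinearMap.id))
        ((LinearMap.lTensor H (Coalgebra.comul : H →ₗ[k] H ⊗[k] H))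
          ((Coalgebra.comul : H →ₗ[k] H ⊗[k] H) h))
      = ∑ i ∈ r.index, ∑ j ∈ (r2 i).index, ∑ q ∈ T i,
          (q.1 ⊗ₜ[k] (nabla q.2 : H ⊗[k] M)) ⊗ₜ[k]
            ((bdown ((r2 i).left j) : H ⊗[k] M) ⊗ₜ[k] (r2 i).right j) := by
    rw [← r.eq, map_sum, map_sum]
    refine Finset.sum_congr rfl fun i _ => ?_
    rw [LinearMap.lTensor_tmul, ← (r2 i).eq, TensorProduct.tmul_sum, map_sum]
    refine Finset.sum_congr rfl fun j _ => ?_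
    simp only [TensorProduct.map_tmul, LinearMap.coe_comp, Function.comp_apply,
      AlgHom.toLinearMap_apply, LinearMap.id_coe, id_eq]
    rw [hT i, map_sum, TensorProduct.sum_tmul]
    exact Finset.sum_congr rfl fun q _ => rfl
  have hδx : (auxQ2 k M eta) (delta x) = ∑ p ∈ S, eta p.2 • p.1 := by
    rw [hS, map_sum]
    exact Finset.sum_congr rfl fun p _ => auxQ2_tmul k M eta p.1 p.2
  have hcom : LinearMap.rTensor H ((auxQ2 k M eta).toLinearMap ∘ₗ sigma.toLinearMap)
      ((Coalgebra.comul : H →ₗ[k] H ⊗[k] H) h)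
      = ∑ i ∈ r.index, (∑ q ∈ T i, eta q.2 • q.1) ⊗ₜ[k] r.right i := by
    rw [← r.eq, map_sum]
    refine Finset.sum_congr rfl fun i _ => ?_
    rw [LinearMap.rTensor_tmul, LinearMap.coe_comp, Function.comp_apply,
      AlgHom.toLinearMap_apply, AlgHom.toLinearMap_apply, hT i, map_sum]
    exact congrArg (· ⊗ₜ[k] r.right i)
      (Finset.sum_congr rfl fun q _ => auxQ2_tmul k M eta q.1 q.2)
  simp only [LinearMap.coe_comp, Function.comp_apply, TensorProduct.map_tmul,
    AlgHom.toLinearMap_apply, LinearEquiv.coe_coe]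
  rw [hAexp, hBexp, hδx, hcom]
  simp only [TensorProduct.sum_tmul, TensorProduct.tmul_sum, map_sum]
  have hterm : ∀ (p q : M × M) (i j : H × H),
      auxFinR k M H eta (auxPre k M H
        ((p.1 ⊗ₜ[k] (nabla p.2 : H ⊗[k] M)) ⊗ₜ[k]
          ((q.1 ⊗ₜ[k] (nabla q.2 : H ⊗[k] M)) ⊗ₜ[k]
            ((bdown ((r2 i).left j) : H ⊗[k] M) ⊗ₜ[k] (r2 i).right j))))
      = (eta p.2 * eta q.2) •
          ((p.1 * q.1) ⊗ₜ[k]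
            (Coalgebra.counit (R := k) ((r2 i).right j) • (r2 i).left j)) := by
    intro p q i j
    rw [auxPre_tmul, auxFinR_tmul, map_mul, map_mul, H3, H3, H2,
      ← map_mul, ← Algebra.smul_def, tmul_smul, tmul_smul, smul_comm]
  refine Finset.sum_congr rfl fun i _ => ?_
  conv_lhs => rw [Finset.sum_comm]
  refine Finset.sum_congr rfl fun q _ => ?_
  conv_lhs => rw [Finset.sum_comm]
  refine Finset.sum_congr rfl fun p _ => ?_
  rw [TensorProduct.assoc_symm_tmul, LinearMap.rTensor_tmul, LinearMap.mul'_apply,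
    smul_mul_smul_comm, ← TensorProduct.smul_tmul']
  calc (∑ j ∈ (r2 i).index,
        auxFinR k M H eta (auxPre k M H
          ((p.1 ⊗ₜ[k] (nabla p.2 : H ⊗[k] M)) ⊗ₜ[k]
            ((q.1 ⊗ₜ[k] (nabla q.2 : H ⊗[k] M)) ⊗ₜ[k]
              ((bdown ((r2 i).left j) : H ⊗[k] M) ⊗ₜ[k] (r2 i).right j)))))
      = ∑ j ∈ (r2 i).index, (eta p.2 * eta q.2) •
          ((p.1 * q.1) ⊗ₜ[k]
            (Coalgebra.counit (R := k) ((r2 i).right j) • (r2 i).left j)) :=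
        Finset.sum_congr rfl fun j _ => hterm p q i j
    _ = (eta p.2 * eta q.2) • ((p.1 * q.1) ⊗ₜ[k] r.right i) := by
        rw [← Finset.smul_sum, ← TensorProduct.tmul_sum,
          repr_sum_smul_counit k H (r2 i)]

lemma auxL_eq_id_iff
    (delta : M →ₐ[k] (M ⊗[k] M)) (sigma : H →ₐ[k] (M ⊗[k] M))
    (Q : (M ⊗[k] M) →ₐ[k] M) :
    ((LinearMap.rTensor H (LinearMap.mul' k M)) ∘ₗ
      (TensorProduct.assoc k M M H).symm.toLinearMap ∘ₗ
      TensorProduct.map (Q.toLinearMap ∘ₗ delta.toLinearMap)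
        ((LinearMap.rTensor H (Q.toLinearMap ∘ₗ sigma.toLinearMap)) ∘ₗ
          (Coalgebra.comul : H →ₗ[k] H ⊗[k] H)) = LinearMap.id) ↔
    (Q.toLinearMap ∘ₗ delta.toLinearMap = LinearMap.id ∧
     Q.toLinearMap ∘ₗ sigma.toLinearMap =
       (Algebra.linearMap k M) ∘ₗ (Coalgebra.counit : H →ₗ[k] k)) := by
  constructor
  · intro hL
    have hφ : ∀ (m : M) (g : H), (TensorProduct.rid k M)
        ((LinearMap.lTensor M (Coalgebra.counit : H →ₗ[k] k)) (m ⊗ₜ[k] g))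
        = Coalgebra.counit (R := k) g • m := by
      intro m g
      rw [LinearMap.lTensor_tmul, TensorProduct.rid_tmul]
    constructor
    · apply LinearMap.ext
      intro x
      have h0 := LinearMap.congr_fun hL (x ⊗ₜ[k] (1 : H))
      have hc1 : (Coalgebra.comul : H →ₗ[k] H ⊗[k] H) 1 = (1 : H) ⊗ₜ[k] (1 : H) := by
        rw [Bialgebra.comul_one, Algebra.TensorProduct.one_def]
      simp only [LinearMap.coe_comp, Function.comp_apply, TensorProduct.map_tmul,
        AlgHom.toLinearMap_apply, LinearEquiv.coe_coe, hc1, LinearMap.rTensor_tmul,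
        map_one, TensorProduct.assoc_symm_tmul, LinearMap.mul'_apply, mul_one,
        LinearMap.id_apply] at h0
      have h2 := congrArg (fun z => (TensorProduct.rid k M)
        ((LinearMap.lTensor M (Coalgebra.counit : H →ₗ[k] k)) z)) h0
      simp only [hφ, Bialgebra.counit_one, one_smul] at h2
      simpa using h2
    · apply LinearMap.ext
      intro g
      have r : Coalgebra.Repr k g (H × H) := Coalgebra.Repr.arbitrary k g
      have h0 := LinearMap.congr_fun hL ((1 : M) ⊗ₜ[k] g)
      simp only [LinearMap.coe_comp, Function.comp_apply, TensorProduct.map_tmul,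
        AlgHom.toLinearMap_apply, LinearEquiv.coe_coe, LinearMap.id_apply] at h0
      rw [← r.eq, map_sum] at h0
      simp only [LinearMap.rTensor_tmul, LinearMap.coe_comp, Function.comp_apply,
        AlgHom.toLinearMap_apply, TensorProduct.tmul_sum, map_sum, map_one,
        TensorProduct.assoc_symm_tmul, LinearMap.mul'_apply, one_mul] at h0
      have h2 := congrArg (fun z => (TensorProduct.rid k M)
        ((LinearMap.lTensor M (Coalgebra.counit : H →ₗ[k] k)) z)) h0
      simp only [map_sum, hφ] at h2
      have h3 : ∑ i ∈ r.index,
          Coalgebra.counit (R := k) (r.right i) • Q (sigma (r.left i))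
          = Q (sigma g) := by
        conv_rhs => rw [← repr_sum_smul_counit k H r]
        rw [map_sum, map_sum]
        exact Finset.sum_congr rfl fun i _ => by rw [map_smul, map_smul]
      rw [h3] at h2
      simp only [LinearMap.coe_comp, Function.comp_apply, AlgHom.toLinearMap_apply,
        Algebra.linearMap_apply]
      rw [h2, Algebra.algebraMap_eq_smul_one]
  · rintro ⟨hd, hs⟩
    have hdx : ∀ x : M, Q (delta x) = x := fun x => LinearMap.congr_fun hd x
    have hsg : ∀ g : H, Q (sigma g) = algebraMap k M (Coalgebra.counit (R := k) g) := by
      intro g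
      have := LinearMap.congr_fun hs g
      simpa using this
    apply TensorProduct.ext'
    intro x g
    have r : Coalgebra.Repr k g (H × H) := Coalgebra.Repr.arbitrary k g
    simp only [LinearMap.coe_comp, Function.comp_apply, TensorProduct.map_tmul,
      AlgHom.toLinearMap_apply, LinearEquiv.coe_coe, LinearMap.id_apply]
    rw [← r.eq, map_sum]
    simp only [LinearMap.rTensor_tmul, LinearMap.coe_comp, Function.comp_apply,
      AlgHom.toLinearMap_apply, TensorProduct.tmul_sum, map_sum,
      TensorProduct.assoc_symm_tmul, LinearMap.mul'_apply, hdx, hsg,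
      mul_algebraMap_eq_smul]
    calc ∑ i ∈ r.index,
          ((Coalgebra.counit (R := k) (r.left i) • x) ⊗ₜ[k] r.right i)
        = x ⊗ₜ[k] ∑ i ∈ r.index,
            Coalgebra.counit (R := k) (r.left i) • r.right i := by
          rw [TensorProduct.tmul_sum]
          exact Finset.sum_congr rfl fun i _ => TensorProduct.smul_tmul _ _ _
      _ = x ⊗ₜ[k] g := by rw [repr_sum_counit_smul k H r]

lemma auxQ1_lin (eta : M →ₐ[k] k) :
    (auxQ1 k M eta).toLinearMap =
      (TensorProduct.lid k M).toLinearMap ∘ₗ (LinearMap.rTensor M eta.toLinearMap) := by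
  apply TensorProduct.ext'
  intro a b
  simp [auxQ1_apply_eq]

lemma auxQ2_lin (eta : M →ₐ[k] k) :
    (auxQ2 k M eta).toLinearMap =
      (TensorProduct.rid k M).toLinearMap ∘ₗ (LinearMap.lTensor M eta.toLinearMap) := by
  apply TensorProduct.ext'
  intro a b
  simp [auxQ2_apply_eq]

end Aux

/-- For a right cocycle double cross coproduct pair `(M, H)`, the
comultiplication of `M ⊗ H` together with the counit `ε(x⊗h) = η(x)ε(h)` is counital
if and only if `η(x⁽¹⁾)x⁽²⁾ = x = x⁽¹⁾η(x⁽²⁾)` and `η(h⁽¹⁾)h⁽²⁾ = ε(h)1 = h⁽¹⁾η(h⁽²⁾)`. -/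
theorem cocycle_double_cross_coproduct_counital_iff
    (eta : M →ₐ[k] k)
    (nabla : M →ₐ[k] (H ⊗[k] M)) (bdown : H →ₐ[k] (H ⊗[k] M))
    (delta : M →ₐ[k] (M ⊗[k] M)) (sigma : H →ₐ[k] (M ⊗[k] M))
    -- `ε(x₍₋₁₎) x₍₀₎ = x`
    (h1 : (TensorProduct.lid k M).toLinearMap ∘ₗ
        (LinearMap.rTensor M (Coalgebra.counit : H →ₗ[k] k)) ∘ₗ nabla.toLinearMap =
      LinearMap.id)
    -- `h₍0̄₎ η(h₍1̄₎) = h`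
    (h2 : (TensorProduct.rid k H).toLinearMap ∘ₗ
        (LinearMap.lTensor H eta.toLinearMap) ∘ₗ bdown.toLinearMap =
      LinearMap.id)
    -- `x₍₋₁₎ η(x₍₀₎) = η(x) 1`
    (h3 : (TensorProduct.rid k H).toLinearMap ∘ₗ
        (LinearMap.lTensor H eta.toLinearMap) ∘ₗ nabla.toLinearMap =
      (Algebra.linearMap k H) ∘ₗ eta.toLinearMap)
    -- `ε(h₍0̄₎) h₍1̄₎ = ε(h) 1`
    (h4 : (TensorProduct.lid k M).toLinearMap ∘ₗ
        (LinearMap.rTensor M (Coalgebra.counit : H →ₗ[k] k)) ∘ₗ bdown.toLinearMap =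
      (Algebra.linearMap k M) ∘ₗ (Coalgebra.counit : H →ₗ[k] k))
    -- `η(h⁽¹⁾) η(h⁽²⁾) = ε(h)`
    (h5 : (TensorProduct.lid k k).toLinearMap ∘ₗ
        (TensorProduct.map eta.toLinearMap eta.toLinearMap) ∘ₗ sigma.toLinearMap =
      (Coalgebra.counit : H →ₗ[k] k)) :
    -- the counit of the cocycle double cross coproduct
    letI epsG : (M ⊗[k] H) →ₗ[k] k :=
      (TensorProduct.lid k k).toLinearMap ∘ₗ
        (TensorProduct.map eta.toLinearMap (Coalgebra.counit : H →ₗ[k] k))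
    -- counitality iff the four conditions
    (((TensorProduct.lid k (M ⊗[k] H)).toLinearMap ∘ₗ
        (LinearMap.rTensor (M ⊗[k] H) epsG) ∘ₗ
        cdccComul k M H nabla bdown delta sigma = LinearMap.id) ∧
     ((TensorProduct.rid k (M ⊗[k] H)).toLinearMap ∘ₗ
        (LinearMap.lTensor (M ⊗[k] H) epsG) ∘ₗ
        cdccComul k M H nabla bdown delta sigma = LinearMap.id)) ↔
    (((TensorProduct.lid k M).toLinearMap ∘ₗ
        (LinearMap.rTensor M eta.toLinearMap) ∘ₗ delta.toLinearMap =
          LinearMap.id) ∧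
     ((TensorProduct.rid k M).toLinearMap ∘ₗ
        (LinearMap.lTensor M eta.toLinearMap) ∘ₗ delta.toLinearMap =
          LinearMap.id) ∧
     ((TensorProduct.lid k M).toLinearMap ∘ₗ
        (LinearMap.rTensor M eta.toLinearMap) ∘ₗ sigma.toLinearMap =
          (Algebra.linearMap k M) ∘ₗ (Coalgebra.counit : H →ₗ[k] k)) ∧
     ((TensorProduct.rid k M).toLinearMap ∘ₗ
        (LinearMap.lTensor M eta.toLinearMap) ∘ₗ sigma.toLinearMap =
          (Algebra.linearMap k M) ∘ₗ (Coalgebra.counit : H →ₗ[k] k))) := by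
  have H1 : ∀ m : M, auxP1 k M H (nabla m) = m := by
    intro m
    rw [auxP1_apply_eq]
    simpa using LinearMap.congr_fun h1 m
  have H4 : ∀ x : H, auxP1 k M H (bdown x) =
      algebraMap k M (Coalgebra.counit (R := k) x) := by
    intro x
    rw [auxP1_apply_eq]
    simpa using LinearMap.congr_fun h4 x
  have H2 : ∀ x : H, auxP2 k M H eta (bdown x) = x := by
    intro x
    rw [auxP2_apply_eq]
    simpa using LinearMap.congr_fun h2 x
  have H3 : ∀ m : M, auxP2 k M H eta (nabla m) = algebraMap k H (eta m) := by
    intro m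
    rw [auxP2_apply_eq]
    simpa using LinearMap.congr_fun h3 m
  have kl := keyL k M H eta nabla bdown delta sigma H1 H4
  have kr := keyR k M H eta nabla bdown delta sigma H2 H3
  rw [kl, kr, auxL_eq_id_iff k M H delta sigma (auxQ1 k M eta),
    auxL_eq_id_iff k M H delta sigma (auxQ2 k M eta),
    auxQ1_lin k M eta, auxQ2_lin k M eta, LinearMap.comp_assoc,
    LinearMap.comp_assoc, LinearMap.comp_assoc, LinearMap.comp_assoc]
  tauto

end
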